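/- arXiv:1509.04932 — 2 statements merged into one kernel-verified Lean document; each statement's English description precedes it below -/
import Mathlib

section
/- If n is even, the minimum length of an odd cycle in the folded hypercube FQ_n is n + 1. -/
open SimpleGraph

/-- The `n`-dimensional hypercube: vertices are binary strings of length `n`
(indexed so that bit `i+1` of the paper is index `i`), adjacent iff they
differ in exactly one bit. -/
def hypercube (n : ℕ) : SimpleGraph (Fin n → Bool) where
  Adj u v := ∃! i, u i ≠ v i
  symm := by
    constructor
    rintro u v ⟨i, hi, hu⟩
    exact ⟨i, hi.symm, fun j hj => hu j hj.symm⟩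
  loopless := by
    constructor
    rintro u ⟨i, hi, -⟩
    exact hi rfl

/-- Skip relation: `u` and `v` differ exactly in the last `k` bits
(indices `0, …, k-1`). -/
def skipRel (n k : ℕ) (u v : Fin n → Bool) : Prop :=
  u ≠ v ∧ ∀ i : Fin n, (i.val < k → u i ≠ v i) ∧ (k ≤ i.val → u i = v i)

/-- The enhanced hypercube `Q_{n,k}`: hypercube edges together with skip edges. -/
def enhanced (n k : ℕ) : SimpleGraph (Fin n → Bool) where
  Adj u v := (hypercube n).Adj u v ∨ skipRel n k u v
  symm := by
    constructor
    rintro u v (h | ⟨hne, h⟩)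
    · exact Or.inl h.symm
    · exact Or.inr ⟨hne.symm, fun i =>
        ⟨fun hi => ((h i).1 hi).symm, fun hi => ((h i).2 hi).symm⟩⟩
  loopless := by
    constructor
    rintro u (h | ⟨hne, -⟩)
    · exact (hypercube n).irrefl h
    · exact hne rfl

/-- The folded hypercube `FQ_n`: hypercube edges together with complementary edges. -/
def folded (n : ℕ) : SimpleGraph (Fin n → Bool) where
  Adj u v := (hypercube n).Adj u v ∨ (u ≠ v ∧ ∀ i, u i ≠ v i)
  symm := by
    constructor
    rintro u v (h | ⟨hne, h⟩)
    · exact Or.inl h.symm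
    · exact Or.inr ⟨hne.symm, fun i => (h i).symm⟩
  loopless := by
    constructor
    rintro u (h | ⟨hne, -⟩)
    · exact (hypercube n).irrefl h
    · exact hne rfl

/-- The Cartesian product `K₂ × G`: two copies of `G` joined by crossing edges. -/
def K2Prod {V : Type*} (G : SimpleGraph V) : SimpleGraph (Bool × V) :=
  (completeGraph Bool) □ G

/-- The edge `e` lies on a cycle of length `l` in `G`. -/
def EdgeOnCycle {V : Type*} (G : SimpleGraph V) (e : Sym2 V) (l : ℕ) : Prop :=
  ∃ (v : V) (c : G.Walk v v), c.IsCycle ∧ c.length = l ∧ e ∈ c.edges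

/-! ### Auxiliary machinery -/

namespace FoldedAux

/-- Vertex `j` of the canonical cycle: first `j` bits set. -/
def vtx (n j : ℕ) : Fin n → Bool := fun i => decide (i.val < j)

lemma vtx_inj {n j k : ℕ} (hj : j ≤ n) (hk : k ≤ n) (h : vtx n j = vtx n k) : j = k := by
  by_contra hne
  rcases Nat.lt_or_ge j k with hlt | hge
  · have := congrFun h ⟨j, lt_of_lt_of_le hlt hk⟩
    simp [vtx, hlt] at this
  · have hlt : k < j := lt_of_le_of_ne hge (Ne.symm hne)
    have := congrFun h ⟨k, lt_of_lt_of_le hlt hj⟩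
    simp [vtx, hlt] at this

lemma adj_step (n j : ℕ) (hj : j < n) :
    (folded n).Adj (vtx n (j + 1)) (vtx n j) := by
  left
  refine ⟨⟨j, hj⟩, ?_, ?_⟩
  · simp [vtx]
  · rintro ⟨i, hi⟩ hne
    simp only [vtx, ne_eq, decide_eq_decide] at hne
    have : i = j := by omega
    simpa using this

lemma adj_comp (n : ℕ) (hn : 1 ≤ n) : (folded n).Adj (vtx n 0) (vtx n n) := by
  right
  constructor
  · intro h
    have := vtx_inj (Nat.zero_le n) le_rfl h
    omega
  · intro i
    simp [vtx, i.isLt]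

/-- The descending path `vtx n j, vtx n (j-1), …, vtx n 0`. -/
def pth (n : ℕ) : (j : ℕ) → j ≤ n → (folded n).Walk (vtx n j) (vtx n 0)
  | 0, _ => SimpleGraph.Walk.nil
  | j + 1, h => SimpleGraph.Walk.cons (adj_step n j (by omega)) (pth n j (by omega))

lemma pth_length (n : ℕ) : ∀ (j : ℕ) (h : j ≤ n), (pth n j h).length = j
  | 0, _ => rfl
  | j + 1, h => by simp [pth, pth_length n j (by omega)]

lemma pth_support (n : ℕ) : ∀ (j : ℕ) (h : j ≤ n) (x : Fin n → Bool),
    x ∈ (pth n j h).support ↔ ∃ k ≤ j, x = vtx n k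
  | 0, _, x => by
    simp only [pth, SimpleGraph.Walk.support_nil, List.mem_singleton]
    constructor
    · rintro rfl; exact ⟨0, le_refl _, rfl⟩
    · rintro ⟨k, hk, rfl⟩; rw [Nat.le_zero] at hk; subst hk; rfl
  | j + 1, h, x => by
    simp only [pth, SimpleGraph.Walk.support_cons, List.mem_cons,
      pth_support n j (by omega) x]
    constructor
    · rintro (rfl | ⟨k, hk, rfl⟩)
      · exact ⟨j + 1, le_refl _, rfl⟩
      · exact ⟨k, by omega, rfl⟩
    · rintro ⟨k, hk, rfl⟩
      rcases Nat.lt_or_ge k (j + 1) with hlt | hge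
      · exact Or.inr ⟨k, by omega, rfl⟩
      · have : k = j + 1 := by omega
        subst this; exact Or.inl rfl

lemma pth_isPath (n : ℕ) : ∀ (j : ℕ) (h : j ≤ n), (pth n j h).IsPath
  | 0, _ => SimpleGraph.Walk.IsPath.nil
  | j + 1, h => by
    apply (pth_isPath n j (by omega)).cons
    rw [pth_support n j (by omega)]
    rintro ⟨k, hk, hkeq⟩
    have := vtx_inj (n := n) (by omega) (by omega) hkeq
    omega

lemma pth_edges (n : ℕ) : ∀ (j : ℕ) (h : j ≤ n) (e : Sym2 (Fin n → Bool)),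
    e ∈ (pth n j h).edges → ∃ k < j, e = s(vtx n (k + 1), vtx n k)
  | 0, _, e => by simp [pth]
  | j + 1, h, e => by
    simp only [pth, SimpleGraph.Walk.edges_cons, List.mem_cons]
    rintro (rfl | he)
    · exact ⟨j, by omega, rfl⟩
    · obtain ⟨k, hk, rfl⟩ := pth_edges n j (by omega) e he
      exact ⟨k, by omega, rfl⟩

/-- Bool-valued: dart changes coordinate `i`. -/
def chg {n : ℕ} (i : Fin n) (d : (folded n).Dart) : Bool :=
  d.fst i != d.snd i

/-- Bool-valued: dart is a complementary edge. -/
def cpl {n : ℕ} (d : (folded n).Dart) : Bool :=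
  decide (∀ i, d.fst i ≠ d.snd i)

/-- `Bool` as an element of `ZMod 2`. -/
def bval (b : Bool) : ZMod 2 := if b then 1 else 0

lemma bval_add_bval (a b : Bool) :
    bval a + bval b = if (a != b) then 1 else 0 := by
  cases a <;> cases b <;> decide

lemma bval_self (a : Bool) : bval a + bval a = 0 := by
  cases a <;> decide

/-- Telescoping: the parity of coordinate changes along a walk. -/
lemma telescope {n : ℕ} {u w : Fin n → Bool} (p : (folded n).Walk u w) (i : Fin n) :
    ((p.darts.map (fun d => bval (d.fst i) + bval (d.snd i))).sum : ZMod 2)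
      = bval (u i) + bval (w i) := by
  induction p with
  | nil =>
    simp only [SimpleGraph.Walk.darts_nil, List.map_nil, List.sum_nil]
    exact (bval_self _).symm
  | cons h q ih =>
    rw [SimpleGraph.Walk.darts_cons, List.map_cons, List.sum_cons, ih]
    have key : ∀ a b c : ZMod 2, a + b + (b + c) = a + c := by decide
    exact key _ _ _

lemma sum_boole_eq_countP {α : Type*} (p : α → Bool) (L : List α) :
    ((L.map (fun d => if p d then (1 : ZMod 2) else 0)).sum : ZMod 2)
      = (L.countP p : ZMod 2) := by
  induction L with
  | nil => simp
  | cons a L ih =>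
    rw [List.map_cons, List.sum_cons, ih, List.countP_cons]
    by_cases h : p a <;> simp [h] <;> push_cast <;> ring

lemma sum_ite_eq_count {α : Type*} (p : α → Bool) (a b : ℕ) (L : List α) :
    (L.map (fun d => if p d then a else b)).sum
      = a * L.countP p + b * L.countP (fun d => !p d) := by
  induction L with
  | nil => simp
  | cons x L ih =>
    rw [List.map_cons, List.sum_cons, ih, List.countP_cons, List.countP_cons]
    by_cases h : p x <;> simp [h] <;> ring

lemma sum_countP_swap {α : Type*} (n : ℕ) (q : Fin n → α → Bool) (L : List α) :
    ∑ i : Fin n, L.countP (q i)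
      = (L.map (fun d => (Finset.univ.filter (fun i => q i d = true)).card)).sum := by
  induction L with
  | nil => simp
  | cons x L ih =>
    simp only [List.map_cons, List.sum_cons, List.countP_cons]
    rw [Finset.sum_add_distrib, ih, ← Finset.card_filter]
    ring

end FoldedAux

open FoldedAux in
/-- If `n` is even, the minimum length of an odd cycle in `FQ_n` is `n + 1`. -/
theorem stmt11 (n : ℕ) (hn : 1 ≤ n) (he : Even n) :
    (∃ (v : Fin n → Bool) (c : (folded n).Walk v v), c.IsCycle ∧ c.length = n + 1) ∧
    (∀ (v : Fin n → Bool) (c : (folded n).Walk v v), c.IsCycle → Odd c.length →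
      n + 1 ≤ c.length) := by
  have hn2 : 2 ≤ n := by
    rcases he with ⟨m, rfl⟩; omega
  constructor
  · -- Construction of an odd cycle of length n + 1
    refine ⟨vtx n 0, SimpleGraph.Walk.cons (adj_comp n hn) (pth n n le_rfl), ?_, ?_⟩
    · rw [SimpleGraph.Walk.cons_isCycle_iff]
      refine ⟨pth_isPath n n le_rfl, ?_⟩
      intro he'
      obtain ⟨k, hk, hkeq⟩ := pth_edges n n le_rfl _ he'
      rw [Sym2.eq_iff] at hkeq
      rcases hkeq with ⟨h1, h2⟩ | ⟨h1, h2⟩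
      · have := vtx_inj (n := n) (by omega) (by omega) h1
        omega
      · have := vtx_inj (n := n) (by omega) (by omega) h1
        have := vtx_inj (n := n) (by omega) (by omega) h2
        omega
    · simp [pth_length n n le_rfl]
  · -- Lower bound
    intro v c _ hodd
    set L := c.darts with hL
    -- per-coordinate change counts
    set A : Fin n → ℕ := fun i => L.countP (chg i) with hA
    -- count of complementary darts and hypercube darts
    set C : ℕ := L.countP cpl with hC
    set H : ℕ := L.countP (fun d => !cpl d) with hH
    have hlen : c.length = C + H := by
      rw [← SimpleGraph.Walk.length_darts, List.length_eq_countP_add_countP cpl, ← hL,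
        ← hC, hH]
      congr 1
      apply List.countP_congr
      intro x _
      simp
    -- each A i is even
    have hAeven : ∀ i, Even (A i) := by
      intro i
      have h1 := telescope c i
      have h3 : ((L.map (fun d => if chg i d then (1 : ZMod 2) else 0)).sum : ZMod 2)
          = 0 := by
        calc (L.map (fun d => if chg i d then (1 : ZMod 2) else 0)).sum
            = (c.darts.map (fun d => bval (d.fst i) + bval (d.snd i))).sum := by
              rw [hL]
              apply congrArg
              apply List.map_congr_left
              intro d _
              rw [bval_add_bval]
              rfl
          _ = bval (v i) + bval (v i) := h1
          _ = 0 := bval_self _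
      rw [sum_boole_eq_countP] at h3
      have h4 : (2 : ℕ) ∣ A i := by
        rw [hA]
        rwa [ZMod.natCast_eq_zero_iff] at h3
      exact even_iff_two_dvd.mpr h4
    -- double counting
    have hcard : ∀ d ∈ L, (Finset.univ.filter (fun i => chg i d = true)).card
        = if cpl d then n else 1 := by
      intro d _
      rcases d.adj with hyp | comp
      · -- hypercube dart: exactly one coordinate changes
        obtain ⟨i, hi, hiu⟩ := hyp
        have hcmp : cpl d = false := by
          apply decide_eq_false
          intro hall
          -- two distinct coordinates both change, contradicting uniqueness
          have h0 : (⟨0, by omega⟩ : Fin n) ≠ (⟨1, by omega⟩ : Fin n) := by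
            intro hx
            have := congrArg Fin.val hx
            simp at this
          have e0 := hiu ⟨0, by omega⟩ (hall _)
          have e1 := hiu ⟨1, by omega⟩ (hall _)
          exact h0 (e0.trans e1.symm)
        rw [hcmp, if_neg Bool.false_ne_true]
        rw [Finset.card_eq_one]
        refine ⟨i, ?_⟩
        ext j
        simp only [Finset.mem_filter, Finset.mem_univ, true_and, Finset.mem_singleton]
        constructor
        · intro hj
          apply hiu
          simpa [chg, bne_iff_ne] using hj
        · rintro rfl
          simpa [chg] using hi
      · have hcmp : cpl d = true := by
          simp only [cpl, decide_eq_true_iff]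
          exact comp.2
        rw [hcmp, if_pos rfl]
        rw [Finset.filter_true_of_mem, Finset.card_univ, Fintype.card_fin]
        intro i _
        simpa [chg] using comp.2 i
    have hsum : ∑ i : Fin n, A i = n * C + H := by
      rw [hA]
      rw [sum_countP_swap n chg L]
      rw [List.map_congr_left hcard]
      exact sum_ite_eq_count cpl n 1 L |>.trans (by ring)
    -- H is even
    have hHeven : Even H := by
      have hS : Even (∑ i : Fin n, A i) :=
        Finset.even_sum _ fun i _ => hAeven i
      rw [hsum] at hS
      rcases he with ⟨m, hm⟩
      rcases hS with ⟨s, hs⟩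
      have h5 : n * C = 2 * (m * C) := by rw [hm]; ring
      refine ⟨s - m * C, ?_⟩
      omega
    -- C is odd, hence ≥ 1
    have hCodd : Odd C := by
      rw [hlen] at hodd
      rcases hHeven with ⟨h2, hh⟩
      rcases hodd with ⟨k, hk⟩
      exact ⟨k - h2, by omega⟩
    have hC1 : 1 ≤ C := hCodd.pos
    -- each A i ≥ C + 1
    have hAi : ∀ i, C + 1 ≤ A i := by
      intro i
      have hle : C ≤ A i := by
        apply List.countP_mono_left
        intro d _ hd
        simp only [cpl, decide_eq_true_iff] at hd
        simpa [chg] using hd i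
      rcases Nat.lt_or_ge C (A i) with h | h
      · omega
      · exfalso
        have : A i = C := le_antisymm h hle
        rcases hAeven i with ⟨a, ha⟩
        rcases hCodd with ⟨b, hb⟩
        omega
    -- conclude
    have hge : n * (C + 1) ≤ ∑ i : Fin n, A i := by
      calc n * (C + 1) = ∑ _i : Fin n, (C + 1) := by
            rw [Finset.sum_const, Finset.card_univ, Fintype.card_fin, smul_eq_mul, mul_comm]
        _ ≤ ∑ i : Fin n, A i := Finset.sum_le_sum fun i _ => hAi i
    rw [hsum] at hge
    have h6 : n * (C + 1) = n * C + n := by ring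
    omega
end

section
/- If k is even, then every edge of the enhanced hypercube Q_{n,k} (n ≥ 3, 2 ≤ k ≤ n) lies on a cycle of every odd length l with k + 3 ≤ l ≤ 2^n − 1. -/
open SimpleGraph

namespace QnkAux

open Finset

variable {n : ℕ}

/-- Hamming distance. -/
def dd {n : ℕ} (u v : Fin n → Bool) : ℕ := (Finset.univ.filter fun i => u i ≠ v i).card

lemma dd_comm (u v : Fin n → Bool) : dd u v = dd v u := by
  unfold dd; congr 1; apply Finset.filter_congr; intro i _; simp [ne_comm]

lemma dd_eq_zero_iff {u v : Fin n → Bool} : dd u v = 0 ↔ u = v := by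
  unfold dd
  rw [Finset.card_eq_zero, Finset.filter_eq_empty_iff]
  constructor
  · intro h; funext i; have := h (Finset.mem_univ i); simpa using this
  · intro h i _; simp [h]

lemma dd_le (u v : Fin n → Bool) : dd u v ≤ n := by
  simpa [dd] using Finset.card_filter_le (Finset.univ : Finset (Fin n)) _

lemma dd_pos_of_ne {u v : Fin n → Bool} (h : u ≠ v) : 1 ≤ dd u v := by
  rcases Nat.eq_zero_or_pos (dd u v) with h0 | h1
  · exact absurd (dd_eq_zero_iff.mp h0) h
  · exact h1

lemma adj_iff {u v : Fin n → Bool} : (hypercube n).Adj u v ↔ dd u v = 1 := by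
  constructor
  · rintro ⟨i, hi, hu⟩
    have : (Finset.univ.filter fun j => u j ≠ v j) = {i} := by
      ext j; simp only [Finset.mem_filter, Finset.mem_univ, true_and, Finset.mem_singleton]
      exact ⟨fun h => hu j h, fun h => h ▸ hi⟩
    rw [dd, this, Finset.card_singleton]
  · intro h
    obtain ⟨i, hi⟩ := Finset.card_eq_one.mp h
    have hmem : i ∈ Finset.univ.filter fun j => u j ≠ v j := by rw [hi]; simp
    refine ⟨i, by simpa using hmem, fun j hj => ?_⟩
    have : j ∈ Finset.univ.filter fun j => u j ≠ v j := by simpa using hj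
    rw [hi] at this; simpa using this

lemma dd_cons (a b : Bool) (x y : Fin n → Bool) :
    dd (Fin.cons a x) (Fin.cons b y) = (if a = b then 0 else 1) + dd x y := by
  unfold dd
  rw [Finset.card_filter, Finset.card_filter, Fin.sum_univ_succ]
  by_cases hab : a = b <;> simp [hab]

lemma dd_cons_same (a : Bool) (x y : Fin n → Bool) :
    dd (Fin.cons a x) (Fin.cons a y) = dd x y := by simp [dd_cons]

lemma dd_cons_diff {a b : Bool} (hab : a ≠ b) (x y : Fin n → Bool) :
    dd (Fin.cons a x) (Fin.cons b y) = 1 + dd x y := by simp [dd_cons, hab]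

/-- If `u` and `w` differ exactly at `i`, distances to any `v` differ by one. -/
lemma dd_step {u w v : Fin n → Bool} (i : Fin n) (hne : u i ≠ w i)
    (heq : ∀ j, j ≠ i → u j = w j) :
    dd w v = dd u v + 1 ∨ dd u v = dd w v + 1 := by
  have h1 : dd u v = (∑ j ∈ Finset.univ.erase i, if u j ≠ v j then 1 else 0)
      + (if u i ≠ v i then 1 else 0) := by
    rw [dd, Finset.card_filter, ← Finset.sum_erase_add _ _ (Finset.mem_univ i)]
  have h2 : dd w v = (∑ j ∈ Finset.univ.erase i, if u j ≠ v j then 1 else 0)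
      + (if w i ≠ v i then 1 else 0) := by
    rw [dd, Finset.card_filter, ← Finset.sum_erase_add _ _ (Finset.mem_univ i)]
    congr 1
    apply Finset.sum_congr rfl
    intro j hj
    rw [heq j (Finset.ne_of_mem_erase hj)]
  rw [h1, h2]
  cases hu : u i <;> cases hw : w i <;> cases hv : v i <;>
    simp_all <;> omega

/-- Flip one bit. -/
def flip (i : Fin n) (u : Fin n → Bool) : Fin n → Bool := Function.update u i (!(u i))

lemma flip_apply_self (i : Fin n) (u : Fin n → Bool) : flip i u i = !(u i) := by
  simp [flip]

lemma flip_apply_ne (i j : Fin n) (u : Fin n → Bool) (h : j ≠ i) : flip i u j = u j := by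
  simp [flip, Function.update_apply, h]

lemma flip_ne_self (i : Fin n) (u : Fin n → Bool) : flip i u ≠ u := by
  intro h
  have := congrFun h i
  rw [flip_apply_self] at this
  exact (Bool.not_ne_self _) this

lemma dd_flip_self (i : Fin n) (u : Fin n → Bool) : dd (flip i u) u = 1 := by
  rw [← adj_iff]
  refine ⟨i, by simp [flip_apply_self], fun j hj => ?_⟩
  by_contra hji
  exact hj (flip_apply_ne i j u hji)

lemma flip_inj {i j : Fin n} {u : Fin n → Bool} (h : flip i u = flip j u) : i = j := by
  by_contra hij
  have := congrFun h i
  rw [flip_apply_self, flip_apply_ne j i u hij] at this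
  exact (Bool.not_ne_self _) this

lemma dd_flip_step (i : Fin n) (u v : Fin n → Bool) :
    dd (flip i u) v = dd u v + 1 ∨ dd u v = dd (flip i u) v + 1 := by
  have := dd_step (u := u) (w := flip i u) (v := v) i
    (by simp [flip_apply_self]) (fun j hj => (flip_apply_ne i j u hj).symm)
  tauto

lemma adj_of_dd_one {u v : Fin n → Bool} (h : dd u v = 1) : (hypercube n).Adj u v :=
  adj_iff.mpr h

lemma adj_flip (i : Fin n) (u : Fin n → Bool) : (hypercube n).Adj u (flip i u) := by
  rw [adj_iff, dd_comm]; exact dd_flip_self i u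


open Finset SimpleGraph.Walk
variable {n : ℕ}

/-- Non-dependent `Fin.cons`. -/
def vcons (b : Bool) (x : Fin n → Bool) : Fin (n+1) → Bool := Fin.cons b x

@[simp] lemma vcons_zero (b : Bool) (x : Fin n → Bool) : vcons b x 0 = b := rfl

@[simp] lemma vcons_succ (b : Bool) (x : Fin n → Bool) (i : Fin n) :
    vcons b x i.succ = x i := by simp [vcons]

lemma vcons_eq_vcons {a b : Bool} {x y : Fin n → Bool} :
    vcons a x = vcons b y ↔ a = b ∧ x = y := by
  constructor
  · intro h
    refine ⟨congrFun h 0, funext fun i => ?_⟩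
    have := congrFun h i.succ
    simpa using this
  · rintro ⟨rfl, rfl⟩; rfl

lemma vcons_injective (b : Bool) : Function.Injective (vcons (n := n) b) := by
  intro x y h; exact (vcons_eq_vcons.mp h).2

lemma dd_vcons_same (a : Bool) (x y : Fin n → Bool) :
    dd (vcons a x) (vcons a y) = dd x y := by
  simp [vcons, dd_cons]

lemma dd_vcons_diff {a b : Bool} (hab : a ≠ b) (x y : Fin n → Bool) :
    dd (vcons a x) (vcons b y) = 1 + dd x y := by
  simp [vcons, dd_cons, hab]

lemma two_pow_even {n : ℕ} (h : 1 ≤ n) : 2 ^ n % 2 = 0 := by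
  have : (2:ℕ) ^ n = 2 ^ (n-1) * 2 := by
    rw [← pow_succ]
    congr 1
    omega
  omega

lemma eq_vcons_self (u : Fin (n+1) → Bool) : u = vcons (u 0) (Fin.tail u) :=
  (Fin.cons_self_tail u).symm

lemma adj_cons_lift (b : Bool) {x y : Fin n → Bool} (h : (hypercube n).Adj x y) :
    (hypercube (n+1)).Adj (vcons b x) (vcons b y) := by
  obtain ⟨i, hi, hu⟩ := h
  refine ⟨i.succ, by simpa using hi, fun j hj => ?_⟩
  rcases Fin.eq_zero_or_eq_succ j with rfl | ⟨m, rfl⟩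
  · simp at hj
  · simp only [vcons_succ] at hj
    exact congrArg Fin.succ (hu m hj)

lemma adj_cross {b c : Bool} (hbc : b ≠ c) (x : Fin n → Bool) :
    (hypercube (n+1)).Adj (vcons b x) (vcons c x) := by
  refine ⟨0, by simpa using hbc, fun j hj => ?_⟩
  rcases Fin.eq_zero_or_eq_succ j with rfl | ⟨m, rfl⟩
  · rfl
  · simp at hj

/-- Lift a walk in `Q_n` to the side `b` of `Q_{n+1}`. -/
def liftW (b : Bool) : ∀ {x y : Fin n → Bool}, (hypercube n).Walk x y →
    (hypercube (n+1)).Walk (vcons b x) (vcons b y)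
  | _, _, .nil => .nil
  | _, _, .cons h p => .cons (adj_cons_lift b h) (liftW b p)

@[simp] lemma liftW_length (b : Bool) {x y : Fin n → Bool} (p : (hypercube n).Walk x y) :
    (liftW b p).length = p.length := by
  induction p with
  | nil => rfl
  | cons h p ih => simp [liftW, ih]

@[simp] lemma liftW_support (b : Bool) {x y : Fin n → Bool} (p : (hypercube n).Walk x y) :
    (liftW b p).support = p.support.map (vcons b) := by
  induction p with
  | nil => rfl
  | cons h p ih => simp [liftW, ih]

lemma liftW_isPath (b : Bool) {x y : Fin n → Bool} {p : (hypercube n).Walk x y}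
    (hp : p.IsPath) : (liftW b p).IsPath := by
  rw [Walk.isPath_def] at hp ⊢
  rw [liftW_support]
  exact hp.map (vcons_injective b)

/-- Combine a side-`b` path and a side-`c` path with one crossing edge. -/
lemma mix {b c : Bool} (hbc : b ≠ c) {x w y : Fin n → Bool}
    (P1 : (hypercube n).Walk x w) (P2 : (hypercube n).Walk w y)
    (h1 : P1.IsPath) (h2 : P2.IsPath) :
    ∃ W : (hypercube (n+1)).Walk (vcons b x) (vcons c y),
      W.IsPath ∧ W.length = P1.length + P2.length + 1 ∧
      W.support = P1.support.map (vcons b) ++ P2.support.map (vcons c) := by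
  refine ⟨(liftW b P1).append (.cons (adj_cross hbc w) (liftW c P2)), ?_, ?_, ?_⟩
  case refine_3 =>
    rw [Walk.support_append]
    simp
  case refine_2 => simp [Walk.length_append]; omega
  case refine_1 =>
    rw [Walk.isPath_def, Walk.support_append]
    simp only [Walk.support_cons, List.tail_cons, liftW_support]
    rw [List.nodup_append]
    refine ⟨(h1.support_nodup).map (vcons_injective b),
      (h2.support_nodup).map (vcons_injective c), ?_⟩
    intro z hz1 z' hz2 hzz
    subst hzz
    simp only [List.mem_map] at hz1 hz2
    obtain ⟨z1, _, rfl⟩ := hz1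
    obtain ⟨z2, _, h⟩ := hz2
    exact hbc (vcons_eq_vcons.mp h.symm).1

/-- Splice a side-`c` detour `D` into a side-`b` path broken as `P1 – (p,q) – P2`. -/
lemma splice {b c : Bool} (hbc : b ≠ c) {x p q y : Fin n → Bool}
    (P1 : (hypercube n).Walk x p) (D : (hypercube n).Walk p q) (P2 : (hypercube n).Walk q y)
    (hD : D.IsPath) (h12 : (P1.support ++ P2.support).Nodup) :
    ∃ W : (hypercube (n+1)).Walk (vcons b x) (vcons b y),
      W.IsPath ∧ W.length = P1.length + D.length + P2.length + 2 ∧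
      W.support = P1.support.map (vcons b) ++ D.support.map (vcons c)
        ++ P2.support.map (vcons b) := by
  refine ⟨(liftW b P1).append (.cons (adj_cross hbc p)
      ((liftW c D).append (.cons (adj_cross hbc.symm q) (liftW b P2)))), ?_, ?_, ?_⟩
  case refine_3 =>
    rw [Walk.support_append]
    simp only [Walk.support_cons, List.tail_cons, liftW_support, Walk.support_append]
    simp [List.append_assoc]
  case refine_2 => simp [Walk.length_append]; omega
  case refine_1 =>
    rw [Walk.isPath_def, Walk.support_append]
    simp only [Walk.support_cons, List.tail_cons, liftW_support, Walk.support_append]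
    set A := P1.support.map (vcons (n := n) b) with hA
    set B := D.support.map (vcons (n := n) c) with hB
    set C := P2.support.map (vcons (n := n) b) with hC
    have hperm : List.Perm (A ++ (B ++ C)) ((A ++ C) ++ B) := by
      have h1 : List.Perm (A ++ (B ++ C)) (A ++ (C ++ B)) :=
        List.Perm.append_left A List.perm_append_comm
      have h2 : A ++ (C ++ B) = (A ++ C) ++ B := (List.append_assoc _ _ _).symm
      rw [h2] at h1; exact h1
    refine (List.Perm.nodup_iff hperm).mpr ?_
    rw [List.nodup_append]
    refine ⟨?_, hD.support_nodup.map (vcons_injective c), ?_⟩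
    · rw [hA, hC, ← List.map_append]
      exact h12.map (vcons_injective b)
    · intro z hz1 z' hz2 hzz
      subst hzz
      rw [hA, hC] at hz1
      rw [hB] at hz2
      simp only [List.mem_append, List.mem_map] at hz1 hz2
      obtain ⟨z2, _, rfl⟩ := hz2
      rcases hz1 with ⟨z1, _, h⟩ | ⟨z1, _, h⟩ <;> exact hbc (vcons_eq_vcons.mp h).1



lemma add_three_le_two_pow : ∀ n : ℕ, 3 ≤ n → n + 3 ≤ 2 ^ n := by
  intro n h
  induction n with
  | zero => omega
  | succ k ih =>
    rcases Nat.lt_or_ge k 3 with hk | hk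
    · interval_cases k
      · omega
      · omega
      · norm_num
    · have := ih (by omega)
      rw [pow_succ]
      omega

/-- Bipanconnectivity of the hypercube. -/
theorem Hpan : ∀ (n : ℕ) (u v : Fin n → Bool) (m : ℕ),
    m % 2 = dd u v % 2 → dd u v ≤ m → m + 1 ≤ 2 ^ n → (u = v → m = 0) →
    ∃ p : (hypercube n).Walk u v, p.IsPath ∧ p.length = m := by
  intro N
  induction N with
  | zero =>
    intro u v m _ _ hub _
    have huv : u = v := funext fun i => i.elim0
    subst huv
    have : m = 0 := by simpa using hub
    subst this
    exact ⟨.nil, by simp, rfl⟩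
  | succ n IH =>
    intro u v m hpar hle hub huv0
    have hp1 : 2 ^ (n + 1) = 2 * 2 ^ n := by rw [pow_succ]; ring
    have hp2 : 1 ≤ 2 ^ n := Nat.one_le_two_pow
    have hp3 : n < 2 ^ n := Nat.lt_two_pow_self
    rcases Nat.eq_zero_or_pos m with rfl | hm
    · have huv : u = v := dd_eq_zero_iff.mp (by omega)
      subst huv
      exact ⟨.nil, by simp, rfl⟩
    have hne : u ≠ v := fun h => by have := huv0 h; omega
    obtain ⟨a, u₀, rfl⟩ : ∃ a u₀, u = vcons a u₀ := ⟨u 0, Fin.tail u, eq_vcons_self u⟩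
    obtain ⟨c, v₀, rfl⟩ : ∃ c v₀, v = vcons c v₀ := ⟨v 0, Fin.tail v, eq_vcons_self v⟩
    by_cases hac : a = c
    · -- same side
      subst hac
      have hne0 : u₀ ≠ v₀ := fun h => hne (by rw [h])
      rw [dd_vcons_same] at hpar hle
      have hd1 : 1 ≤ dd u₀ v₀ := dd_pos_of_ne hne0
      have hdn : dd u₀ v₀ ≤ n := dd_le _ _
      by_cases hm2 : m + 1 ≤ 2 ^ n
      · obtain ⟨P, hP, hl⟩ := IH u₀ v₀ m hpar hle hm2 (fun h => absurd h hne0)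
        exact ⟨liftW a P, liftW_isPath a hP, by simp [hl]⟩
      · -- long: splice at the first dart
        have hn1 : 1 ≤ n := by omega
        have hev : 2 ^ n % 2 = 0 := two_pow_even hn1
        set d := dd u₀ v₀ with hd
        have hd3 : n + 3 ≤ 2 ^ n ∨ n ≤ 2 := by
          rcases Nat.lt_or_ge n 3 with h | h
          · right; omega
          · left; exact add_three_le_two_pow n h
        set t := 2 ^ n - 2 + d % 2 with ht
        have htd : d ≤ t := by
          rcases hd3 with h | h
          · omega
          · have h12 : n = 1 ∨ n = 2 := by omega
            rcases h12 with h1 | h1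
            · have h4 : (2:ℕ) ^ n = 2 := by rw [h1]; norm_num
              omega
            · have h4 : (2:ℕ) ^ n = 4 := by rw [h1]; norm_num
              omega
        obtain ⟨P, hP, hlP⟩ := IH u₀ v₀ t (by omega) htd (by omega)
          (fun h => absurd h hne0)
        cases P with
        | nil => rw [Walk.length_nil] at hlP; omega
        | @cons _ w₀ _ h1 Q =>
          rw [Walk.length_cons] at hlP
          set s := m - 1 - t with hs
          have hdw : dd u₀ w₀ = 1 := adj_iff.mp h1
          obtain ⟨D, hD, hlD⟩ := IH u₀ w₀ s (by omega) (by omega) (by omega)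
            (fun h => absurd h h1.ne)
          rw [Walk.cons_isPath_iff] at hP
          obtain ⟨W, hW, hlW, _⟩ := splice (b := a) (c := !a) (by cases a <;> simp)
            Walk.nil D Q hD (by
              rw [Walk.support_nil, List.singleton_append, List.nodup_cons]
              exact ⟨hP.2, hP.1.support_nodup⟩)
          exact ⟨W, hW, by rw [hlW]; simp [hlD]; omega⟩
    · -- opposite sides
      rw [dd_vcons_diff hac] at hpar hle
      by_cases h00 : u₀ = v₀
      · -- mirror vertices
        subst h00
        by_cases hm1 : m = 1
        · subst hm1
          refine ⟨.cons (adj_cross hac u₀) .nil, ?_, rfl⟩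
          rw [Walk.isPath_def]
          simp [vcons_eq_vcons, hac]
        · -- m ≥ 3
          have hm3 : 3 ≤ m := by simp [dd_eq_zero_iff.mpr rfl] at hpar; omega
          have hn1 : n ≠ 0 := by rintro rfl; simp at hp1; omega
          have hev : 2 ^ n % 2 = 0 := two_pow_even (by omega)
          set w := flip ⟨0, by omega⟩ u₀ with hw
          have hwu : dd u₀ w = 1 := by rw [dd_comm]; exact dd_flip_self _ _
          have hwne : u₀ ≠ w := (flip_ne_self _ _).symm
          simp [dd_eq_zero_iff.mpr rfl] at hpar hle
          set t := if m ≤ 2 ^ n + 1 then m - 2 else 2 ^ n - 1 with ht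
          set s := m - 1 - t with hs
          obtain ⟨P1, hP1, hl1⟩ := IH u₀ w t (by rw [hwu]; split at ht <;> omega)
            (by rw [hwu]; split at ht <;> omega) (by split at ht <;> omega)
            (fun h => absurd h hwne)
          obtain ⟨P2, hP2, hl2⟩ := IH w u₀ s
            (by rw [dd_comm, hwu]; split at ht <;> omega)
            (by rw [dd_comm, hwu]; split at ht <;> omega) (by split at ht <;> omega)
            (fun h => absurd h.symm hwne)
          obtain ⟨W, hW, hlW, _⟩ := mix hac P1 P2 hP1 hP2
          exact ⟨W, hW, by rw [hlW, hl1, hl2]; split at ht <;> omega⟩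
      · -- u₀ ≠ v₀
        have hd1 : 1 ≤ dd u₀ v₀ := dd_pos_of_ne h00
        have hdn : dd u₀ v₀ ≤ n := dd_le _ _
        by_cases hm2 : m ≤ 2 ^ n
        · obtain ⟨P, hP, hl⟩ := IH u₀ v₀ (m - 1) (by omega) (by omega) (by omega)
            (fun h => absurd h h00)
          obtain ⟨W, hW, hlW, _⟩ := mix hac P Walk.nil hP (by simp)
          exact ⟨W, hW, by rw [hlW, hl]; simp; omega⟩
        · -- long, opposite sides
          set d0 := dd u₀ v₀ with hd0
          have hn2 : 2 ≤ n := by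
            by_contra h
            have h12 : n = 0 ∨ n = 1 := by omega
            rcases h12 with h1 | h1
            · have h4 : (2:ℕ) ^ n = 1 := by rw [h1]; norm_num
              omega
            · have h4 : (2:ℕ) ^ n = 2 := by rw [h1]; norm_num
              omega
          obtain ⟨w, hw1, hw2⟩ : ∃ w, dd w v₀ = 1 ∧ w ≠ u₀ := by
            set f0 := flip ⟨0, by omega⟩ v₀ with hf0
            set f1 := flip ⟨1, by omega⟩ v₀ with hf1
            by_cases h : f0 = u₀
            · refine ⟨f1, dd_flip_self _ _, fun h1 => ?_⟩
              rw [← h] at h1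
              have := flip_inj h1
              simp [Fin.ext_iff] at this
            · exact ⟨f0, dd_flip_self _ _, h⟩
          have hd3 : n + 3 ≤ 2 ^ n ∨ n = 2 := by
            rcases Nat.lt_or_ge n 3 with h | h
            · right; omega
            · left; exact add_three_le_two_pow n h
          have hev : 2 ^ n % 2 = 0 := two_pow_even (by omega)
          have hstep : dd w u₀ = dd v₀ u₀ + 1 ∨ dd v₀ u₀ = dd w u₀ + 1 := by
            obtain ⟨i, hi, huni⟩ := adj_of_dd_one hw1
            refine dd_step i (fun h => hi h.symm) (fun j hj => ?_)
            by_contra h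
            exact hj (huni j (Ne.symm h))
          rw [dd_comm w u₀, dd_comm v₀ u₀] at hstep
          set t := 2 ^ n - 2 + (d0 + 1) % 2 with ht
          set s := m - 1 - t with hs
          obtain ⟨P1, hP1, hl1⟩ := IH u₀ w t (by omega)
            (by
              have hduw : dd u₀ w ≤ n := dd_le _ _
              rcases hd3 with h | h
              · omega
              · have h4 : (2:ℕ) ^ n = 4 := by rw [h]; norm_num
                omega) (by omega)
            (fun h => absurd h.symm hw2)
          obtain ⟨P2, hP2, hl2⟩ := IH w v₀ s (by omega) (by omega) (by omega)
            (fun h => absurd (dd_eq_zero_iff.mpr h) (by omega))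
          obtain ⟨W, hW, hlW, _⟩ := mix hac P1 P2 hP1 hP2
          exact ⟨W, hW, by rw [hlW, hl1, hl2]; omega⟩


open Finset
variable {n : ℕ}

lemma adj_perm (σ : Equiv.Perm (Fin n)) {u v : Fin n → Bool}
    (h : (hypercube n).Adj u v) : (hypercube n).Adj (u ∘ σ) (v ∘ σ) := by
  obtain ⟨i, hi, hu⟩ := h
  refine ⟨σ.symm i, by simpa using hi, fun j hj => ?_⟩
  have := hu (σ j) hj
  have := congrArg σ.symm this
  simpa using this

/-- Transport a walk along a coordinate permutation. -/
def permW (σ : Equiv.Perm (Fin n)) : ∀ {x y : Fin n → Bool}, (hypercube n).Walk x y →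
    (hypercube n).Walk (x ∘ σ) (y ∘ σ)
  | _, _, .nil => .nil
  | _, _, .cons h p => .cons (adj_perm σ h) (permW σ p)

@[simp] lemma permW_length (σ : Equiv.Perm (Fin n)) {x y : Fin n → Bool}
    (p : (hypercube n).Walk x y) : (permW σ p).length = p.length := by
  induction p with
  | nil => rfl
  | cons h p ih => simp [permW, ih]

@[simp] lemma permW_support (σ : Equiv.Perm (Fin n)) {x y : Fin n → Bool}
    (p : (hypercube n).Walk x y) : (permW σ p).support = p.support.map (· ∘ σ) := by
  induction p with
  | nil => rfl
  | cons h p ih => simp [permW, ih]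

lemma comp_perm_injective (σ : Equiv.Perm (Fin n)) :
    Function.Injective (fun u : Fin n → Bool => u ∘ σ) := by
  intro u v h
  funext i
  have := congrFun h (σ.symm i)
  simpa using this

lemma permW_isPath (σ : Equiv.Perm (Fin n)) {x y : Fin n → Bool}
    {p : (hypercube n).Walk x y} (hp : p.IsPath) : (permW σ p).IsPath := by
  rw [SimpleGraph.Walk.isPath_def] at hp ⊢
  rw [permW_support]
  exact hp.map (comp_perm_injective σ)

lemma dd_perm (σ : Equiv.Perm (Fin n)) (u v : Fin n → Bool) :
    dd (u ∘ σ) (v ∘ σ) = dd u v := by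
  unfold dd
  apply Finset.card_bij (fun i _ => σ i)
  · intro i hi
    simp only [Finset.mem_filter, Finset.mem_univ, true_and] at hi ⊢
    exact hi
  · intro i _ j _ h
    exact σ.injective h
  · intro j hj
    refine ⟨σ.symm j, ?_, by simp⟩
    simp only [Finset.mem_filter, Finset.mem_univ, true_and, Function.comp] at hj ⊢
    simpa using hj


open Finset
variable {n : ℕ}

lemma ne_of_dd_one {u v : Fin n → Bool} (h : dd u v = 1) : u ≠ v := by
  intro he; rw [he, dd_eq_zero_iff.mpr rfl] at h; omega

lemma pick2 {α : Type*} {a b x : α} (hab : a ≠ b) : a ≠ x ∨ b ≠ x := by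
  by_cases h : a = x
  · right; intro hbx; exact hab (h.trans hbx.symm)
  · left; exact h

lemma pick3 {α : Type*} {a b c x y : α} (hab : a ≠ b) (hac : a ≠ c) (hbc : b ≠ c) :
    (a ≠ x ∧ a ≠ y) ∨ (b ≠ x ∧ b ≠ y) ∨ (c ≠ x ∧ c ≠ y) := by
  by_cases hax : a = x <;> by_cases hay : a = y <;> by_cases hbx : b = x <;>
    by_cases hby : b = y <;> by_cases hcx : c = x <;> by_cases hcy : c = y <;>
      subst_vars <;> tauto

lemma not_mem_map_vcons_ne {a e : Bool} (hae : a ≠ e) (x₀ : Fin n → Bool)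
    (L : List (Fin n → Bool)) : vcons e x₀ ∉ L.map (vcons a) := by
  intro h
  simp only [List.mem_map] at h
  obtain ⟨z, _, hz⟩ := h
  exact hae (vcons_eq_vcons.mp hz).1

lemma not_mem_map_vcons {e : Bool} {x₀ : Fin n → Bool} {L : List (Fin n → Bool)}
    (hx : x₀ ∉ L) : vcons e x₀ ∉ L.map (vcons e) := by
  intro h
  simp only [List.mem_map] at h
  obtain ⟨z, hz, hze⟩ := h
  rw [(vcons_eq_vcons.mp hze).2] at hz
  exact hx hz

lemma single_path {u v : Fin n → Bool} (h : dd u v = 1) :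
    ((SimpleGraph.Walk.cons (adj_of_dd_one h) .nil : (hypercube n).Walk u v)).IsPath := by
  rw [SimpleGraph.Walk.isPath_def]
  simp [ne_of_dd_one h]

/-- Core of fault-tolerant panconnectivity, assuming the faulty vertex differs
from `u` in coordinate `0`. -/
lemma Fcore (n : ℕ)
    (IH : ∀ (x u v : Fin n → Bool) (m : ℕ), u ≠ v → u ≠ x → v ≠ x →
      m % 2 = dd u v % 2 → dd u v ≤ m → m + 3 ≤ 2 ^ n →
      ∃ p : (hypercube n).Walk u v, p.IsPath ∧ p.length = m ∧ x ∉ p.support) :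
    ∀ (x u v : Fin (n+1) → Bool) (m : ℕ), u ≠ v → u ≠ x → v ≠ x → u 0 ≠ x 0 →
      m % 2 = dd u v % 2 → dd u v ≤ m → m + 3 ≤ 2 ^ (n+1) →
      ∃ p : (hypercube (n+1)).Walk u v, p.IsPath ∧ p.length = m ∧ x ∉ p.support := by
  intro x u v m hne hux hvx h0 hpar hdle hub
  have hp1 : 2 ^ (n + 1) = 2 * 2 ^ n := by rw [pow_succ]; ring
  have hp2 : 1 ≤ 2 ^ n := Nat.one_le_two_pow
  have hp3 : n < 2 ^ n := Nat.lt_two_pow_self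
  obtain ⟨a, u₀, rfl⟩ : ∃ a u₀, u = vcons a u₀ := ⟨u 0, Fin.tail u, eq_vcons_self u⟩
  obtain ⟨c, v₀, rfl⟩ : ∃ c v₀, v = vcons c v₀ := ⟨v 0, Fin.tail v, eq_vcons_self v⟩
  obtain ⟨e, x₀, rfl⟩ : ∃ e x₀, x = vcons e x₀ := ⟨x 0, Fin.tail x, eq_vcons_self x⟩
  have hae : a ≠ e := by simpa using h0
  by_cases hac : a = c
  · -- v on u's side, x on the other side
    subst hac
    have hne0 : u₀ ≠ v₀ := fun h => hne (by rw [h])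
    rw [dd_vcons_same] at hpar hdle
    have hd1 : 1 ≤ dd u₀ v₀ := dd_pos_of_ne hne0
    have hdn : dd u₀ v₀ ≤ n := dd_le _ _
    by_cases hm2 : m + 1 ≤ 2 ^ n
    · obtain ⟨P, hP, hl⟩ := Hpan n u₀ v₀ m hpar hdle hm2 (fun h => absurd h hne0)
      refine ⟨liftW a P, liftW_isPath a hP, by simp [hl], ?_⟩
      rw [liftW_support]
      exact not_mem_map_vcons_ne hae x₀ _
    · -- long case, same side: splice a detour through the x-side
      have h32 : 3 ≤ 2 ^ n := by omega
      have hn2 : 2 ≤ n := by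
        by_contra h
        have h12 : n = 0 ∨ n = 1 := by omega
        rcases h12 with h1 | h1
        · have h4 : (2:ℕ) ^ n = 1 := by rw [h1]; norm_num
          omega
        · have h4 : (2:ℕ) ^ n = 2 := by rw [h1]; norm_num
          omega
      have hev : 2 ^ n % 2 = 0 := two_pow_even (by omega)
      set d := dd u₀ v₀ with hd
      by_cases hspec : n = 2 ∧ d % 2 = 0
      · -- special case: Q_3, antipodal in the square
        obtain ⟨hn2', hdev⟩ := hspec
        have h2n4 : (2:ℕ) ^ n = 4 := by rw [hn2']; norm_num
        have hd2 : d = 2 := by omega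
        have hm4 : m = 4 := by omega
        have hi0 : (0:ℕ) < n := by omega
        have hi1 : (1:ℕ) < n := by omega
        have hmidadj : ∀ i : Fin n, dd (flip i u₀) v₀ = 1 := by
          intro i
          have hst := dd_flip_step i u₀ v₀
          have hle' : dd (flip i u₀) v₀ ≤ n := dd_le _ _
          omega
        have hmidu : ∀ i : Fin n, dd u₀ (flip i u₀) = 1 := by
          intro i; rw [dd_comm]; exact dd_flip_self i u₀
        by_cases hx0 : x₀ = v₀
        · -- construction 2 (through the mirror of u₀)
          set mid := flip ⟨0, hi0⟩ u₀ with hmid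
          have h1 : dd u₀ mid = 1 := hmidu _
          have h2 : dd mid v₀ = 1 := hmidadj _
          obtain ⟨W, hW, hlW, hsW⟩ := splice (b := a) (c := e) hae
            (Walk.nil : (hypercube n).Walk u₀ u₀)
            (.cons (adj_of_dd_one h1) .nil) (.cons (adj_of_dd_one h2) .nil)
            (single_path h1)
            (by
              have hnd : ([u₀, mid, v₀] : List (Fin n → Bool)).Nodup := by
                refine List.nodup_cons.mpr ⟨?_, List.nodup_cons.mpr ⟨?_, List.nodup_singleton _⟩⟩
                · simp only [List.mem_cons, List.mem_singleton, List.not_mem_nil, or_false]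
                  push_neg
                  exact ⟨ne_of_dd_one h1, hne0⟩
                · simp only [List.mem_singleton]
                  exact ne_of_dd_one h2
              simpa using hnd)
          refine ⟨W, hW, by simp at hlW; omega, ?_⟩
          rw [hsW]
          simp only [List.mem_append]
          push_neg
          refine ⟨⟨not_mem_map_vcons_ne hae x₀ _, not_mem_map_vcons ?_⟩,
            not_mem_map_vcons_ne hae x₀ _⟩
          have : x₀ ∉ ([u₀, mid] : List (Fin n → Bool)) := by
            simp only [List.mem_cons, List.mem_singleton, List.not_mem_nil, or_false]
            push_neg
            refine ⟨fun h => hne0 (h.symm.trans hx0), fun h => (ne_of_dd_one h2) (h.symm.trans hx0)⟩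
          simpa using this
        · -- construction 1 (through the mirror of v₀)
          obtain hv : flip ⟨0, hi0⟩ u₀ ≠ x₀ ∨ flip ⟨1, hi1⟩ u₀ ≠ x₀ := by
            apply pick2
            intro h
            have := flip_inj h
            simp [Fin.ext_iff] at this
          obtain ⟨mid, hmidx, h1, h2⟩ : ∃ mid, mid ≠ x₀ ∧ dd u₀ mid = 1 ∧ dd mid v₀ = 1 := by
            rcases hv with h | h
            · exact ⟨_, h, hmidu _, hmidadj _⟩
            · exact ⟨_, h, hmidu _, hmidadj _⟩
          obtain ⟨W, hW, hlW, hsW⟩ := splice (b := a) (c := e) hae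
            (.cons (adj_of_dd_one h1) .nil) (.cons (adj_of_dd_one h2) .nil)
            (Walk.nil : (hypercube n).Walk v₀ v₀)
            (single_path h2)
            (by
              have hnd : ([u₀, mid, v₀] : List (Fin n → Bool)).Nodup := by
                refine List.nodup_cons.mpr ⟨?_, List.nodup_cons.mpr ⟨?_, List.nodup_singleton _⟩⟩
                · simp only [List.mem_cons, List.mem_singleton, List.not_mem_nil, or_false]
                  push_neg
                  exact ⟨ne_of_dd_one h1, hne0⟩
                · simp only [List.mem_singleton]
                  exact ne_of_dd_one h2
              simpa using hnd)
          refine ⟨W, hW, by simp at hlW; omega, ?_⟩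
          rw [hsW]
          simp only [List.mem_append]
          push_neg
          refine ⟨⟨not_mem_map_vcons_ne hae x₀ _, not_mem_map_vcons ?_⟩,
            not_mem_map_vcons_ne hae x₀ _⟩
          have : x₀ ∉ ([mid, v₀] : List (Fin n → Bool)) := by
            simp only [List.mem_cons, List.mem_singleton, List.not_mem_nil, or_false]
            push_neg
            exact ⟨fun h => hmidx h.symm, hx0⟩
          simpa using this
      · -- general long same-side case
        have ht3' : n = 2 → d % 2 = 1 := by
          intro h
          rcases Nat.mod_two_eq_zero_or_one d with h' | h'
          · exact absurd ⟨h, h'⟩ hspec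
          · exact h'
        have hd3 : n + 3 ≤ 2 ^ n ∨ n = 2 := by
          rcases Nat.lt_or_ge n 3 with h | h
          · right; omega
          · left; exact add_three_le_two_pow n h
        set t := 2 ^ n - 2 + d % 2 with ht
        have ht3 : 3 ≤ t := by
          rcases hd3 with h | h
          · omega
          · have h4 : (2:ℕ) ^ n = 4 := by rw [h]; norm_num
            have := ht3' h
            omega
        have htd : d ≤ t := by
          rcases hd3 with h | h
          · omega
          · have h4 : (2:ℕ) ^ n = 4 := by rw [h]; norm_num
            omega
        set s := m - 1 - t with hs
        have hs1 : 1 ≤ s := by omega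
        have hsodd : s % 2 = 1 := by omega
        have hsb : s + 3 ≤ 2 ^ n := by omega
        obtain ⟨P, hP, hlP⟩ := Hpan n u₀ v₀ t (by omega) htd (by omega)
          (fun h => absurd h hne0)
        cases P with
        | nil => rw [SimpleGraph.Walk.length_nil] at hlP; omega
        | @cons _ w1 _ h1 P' =>
          cases P' with
          | nil =>
            rw [SimpleGraph.Walk.length_cons, SimpleGraph.Walk.length_nil] at hlP; omega
          | @cons _ w2 _ h2 P'' =>
            cases P'' with
            | nil =>
              rw [SimpleGraph.Walk.length_cons, SimpleGraph.Walk.length_cons,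
                SimpleGraph.Walk.length_nil] at hlP; omega
            | @cons _ w3 _ h3 R =>
              rw [SimpleGraph.Walk.length_cons, SimpleGraph.Walk.length_cons,
                SimpleGraph.Walk.length_cons] at hlP
              rw [SimpleGraph.Walk.cons_isPath_iff] at hP
              obtain ⟨hP', hu₀⟩ := hP
              rw [SimpleGraph.Walk.cons_isPath_iff] at hP'
              obtain ⟨hP'', hw1⟩ := hP'
              rw [SimpleGraph.Walk.cons_isPath_iff] at hP''
              obtain ⟨hR, hw2⟩ := hP''
              simp only [SimpleGraph.Walk.support_cons, List.mem_cons] at hu₀ hw1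
              push_neg at hu₀ hw1
              obtain ⟨hu01, hu02, hu0R⟩ := hu₀
              obtain ⟨hw12, hw1R⟩ := hw1
              have hnodup : (u₀ :: w1 :: w2 :: R.support).Nodup := by
                simp only [List.nodup_cons, List.mem_cons]
                push_neg
                exact ⟨⟨hu01, hu02, hu0R⟩, ⟨hw12, hw1R⟩, hw2, hR.support_nodup⟩
              -- select a dart among the first three avoiding x₀
              obtain ⟨p, q, P1, P2, hdpq, hpx, hqx, hl12, h12⟩ :
                  ∃ (p q : Fin n → Bool) (P1 : (hypercube n).Walk u₀ p)
                    (P2 : (hypercube n).Walk q v₀),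
                    dd p q = 1 ∧ p ≠ x₀ ∧ q ≠ x₀ ∧
                    P1.length + P2.length + 1 = t ∧
                    (P1.support ++ P2.support).Nodup := by
                by_cases c1 : x₀ ≠ u₀ ∧ x₀ ≠ w1
                · refine ⟨u₀, w1, .nil, .cons h2 (.cons h3 R), adj_iff.mp h1,
                    c1.1.symm, c1.2.symm, by simp; omega, ?_⟩
                  simp only [SimpleGraph.Walk.support_nil, SimpleGraph.Walk.support_cons,
                    List.singleton_append]
                  exact hnodup
                · by_cases c2 : x₀ ≠ w1 ∧ x₀ ≠ w2
                  · refine ⟨w1, w2, .cons h1 .nil, .cons h3 R, adj_iff.mp h2,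
                      c2.1.symm, c2.2.symm, by simp; omega, ?_⟩
                    simp only [SimpleGraph.Walk.support_nil, SimpleGraph.Walk.support_cons,
                      List.cons_append, List.singleton_append]
                    exact hnodup
                  · have hx1 : x₀ = w1 := by
                      push_neg at c1 c2
                      by_cases h : x₀ = w1
                      · exact h
                      · exfalso
                        have hw2x : x₀ = w2 := c2 h
                        by_cases h' : x₀ = u₀
                        · exact hu02 (h'.symm.trans hw2x)
                        · exact h (c1 h')
                    have hw3R : w3 ∈ R.support := R.start_mem_support
                    refine ⟨w2, w3, .cons h1 (.cons h2 .nil), R, adj_iff.mp h3,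
                      fun h => hw12 (hx1 ▸ h).symm, fun h => hw1R (hx1 ▸ h ▸ hw3R), by simp; omega, ?_⟩
                    simp only [SimpleGraph.Walk.support_nil, SimpleGraph.Walk.support_cons,
                      List.cons_append, List.singleton_append]
                    exact hnodup
              obtain ⟨D, hD, hlD, hDx⟩ := IH x₀ p q s (ne_of_dd_one hdpq) hpx hqx
                (by omega) (by omega) hsb
              obtain ⟨W, hW, hlW, hsW⟩ := splice (b := a) (c := e) hae P1 D P2 hD h12
              refine ⟨W, hW, by omega, ?_⟩
              rw [hsW]
              simp only [List.mem_append]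
              push_neg
              exact ⟨⟨not_mem_map_vcons_ne hae x₀ _, not_mem_map_vcons hDx⟩,
                not_mem_map_vcons_ne hae x₀ _⟩
  · -- v on the opposite side from u, same side as x
    have hce : c = e := by
      cases a <;> cases c <;> cases e <;> simp_all
    subst hce
    have hx0v : x₀ ≠ v₀ := fun h => hvx (by rw [h])
    rw [dd_vcons_diff hac] at hpar hdle
    by_cases h00 : u₀ = v₀
    · subst h00
      have hdd0 : dd u₀ u₀ = 0 := dd_eq_zero_iff.mpr rfl
      rw [hdd0] at hpar hdle
      by_cases hm1 : m = 1
      · subst hm1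
        refine ⟨.cons (adj_cross hac u₀) .nil, ?_, rfl, ?_⟩
        · rw [SimpleGraph.Walk.isPath_def]
          simp [vcons_eq_vcons, hac]
        · intro hmem
          simp only [SimpleGraph.Walk.support_cons, SimpleGraph.Walk.support_nil,
            List.mem_cons, List.not_mem_nil, or_false] at hmem
          rcases hmem with h | h
          · exact hac (vcons_eq_vcons.mp h).1.symm
          · exact hx0v (vcons_eq_vcons.mp h).2
      · -- m ≥ 3
        have hm3 : 3 ≤ m := by omega
        have hn2 : 2 ≤ n := by
          by_contra h
          have h12 : n = 0 ∨ n = 1 := by omega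
          rcases h12 with h1 | h1
          · have h4 : (2:ℕ) ^ n = 1 := by rw [h1]; norm_num
            omega
          · have h4 : (2:ℕ) ^ n = 2 := by rw [h1]; norm_num
            omega
        have hev : 2 ^ n % 2 = 0 := two_pow_even (by omega)
        obtain ⟨w, hw1, hwx⟩ : ∃ w, dd w u₀ = 1 ∧ w ≠ x₀ := by
          have h01 : flip ⟨0, by omega⟩ u₀ ≠ flip ⟨1, by omega⟩ u₀ := by
            intro h
            have := flip_inj h
            simp [Fin.ext_iff] at this
          rcases pick2 (x := x₀) h01 with h | h
          · exact ⟨_, dd_flip_self _ _, h⟩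
          · exact ⟨_, dd_flip_self _ _, h⟩
        have hwu : w ≠ u₀ := ne_of_dd_one hw1
        set t := if m ≤ 2 ^ n + 1 then m - 2 else 2 ^ n - 1 with ht
        set s := m - 1 - t with hs
        obtain ⟨P1, hP1, hl1⟩ := Hpan n u₀ w t
          (by rw [dd_comm, hw1]; split at ht <;> omega)
          (by rw [dd_comm, hw1]; split at ht <;> omega) (by split at ht <;> omega)
          (fun h => absurd h.symm hwu)
        obtain ⟨P2, hP2, hl2, hx2⟩ := IH x₀ w u₀ s hwu hwx (fun h => hx0v h.symm)
          (by rw [hw1]; split at ht <;> omega)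
          (by rw [hw1]; split at ht <;> omega) (by split at ht <;> omega)
        obtain ⟨W, hW, hlW, hsW⟩ := mix hac P1 P2 hP1 hP2
        refine ⟨W, hW, by rw [hlW, hl1, hl2]; split at ht <;> omega, ?_⟩
        rw [hsW]
        simp only [List.mem_append]
        push_neg
        exact ⟨not_mem_map_vcons_ne hac x₀ _, not_mem_map_vcons hx2⟩
    · -- u₀ ≠ v₀, opposite sides
      have hd1 : 1 ≤ dd u₀ v₀ := dd_pos_of_ne h00
      have hdn : dd u₀ v₀ ≤ n := dd_le _ _
      by_cases hm2 : m ≤ 2 ^ n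
      · obtain ⟨P, hP, hl⟩ := Hpan n u₀ v₀ (m - 1) (by omega) (by omega) (by omega)
          (fun h => absurd h h00)
        obtain ⟨W, hW, hlW, hsW⟩ := mix hac P Walk.nil hP (by simp)
        refine ⟨W, hW, by rw [hlW, hl]; simp; omega, ?_⟩
        rw [hsW]
        simp only [List.mem_append]
        push_neg
        refine ⟨not_mem_map_vcons_ne hac x₀ _, not_mem_map_vcons ?_⟩
        simp [hx0v]
      · -- long, opposite sides
        set d0 := dd u₀ v₀ with hd0
        have h42 : 4 ≤ 2 ^ n := by omega
        have hn2 : 2 ≤ n := by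
          by_contra h
          have h12 : n = 0 ∨ n = 1 := by omega
          rcases h12 with h1 | h1
          · have h4 : (2:ℕ) ^ n = 1 := by rw [h1]; norm_num
            omega
          · have h4 : (2:ℕ) ^ n = 2 := by rw [h1]; norm_num
            omega
        have hev : 2 ^ n % 2 = 0 := two_pow_even (by omega)
        obtain ⟨w, hw1, hwx, hwu⟩ : ∃ w, dd w v₀ = 1 ∧ w ≠ x₀ ∧ w ≠ u₀ := by
          by_cases hn3 : 3 ≤ n
          · have h01 : flip ⟨0, by omega⟩ v₀ ≠ flip ⟨1, by omega⟩ v₀ := by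
              intro h; have := flip_inj h; simp [Fin.ext_iff] at this
            have h02 : flip ⟨0, by omega⟩ v₀ ≠ flip ⟨2, by omega⟩ v₀ := by
              intro h; have := flip_inj h; simp [Fin.ext_iff] at this
            have h12 : flip ⟨1, by omega⟩ v₀ ≠ flip ⟨2, by omega⟩ v₀ := by
              intro h; have := flip_inj h; simp [Fin.ext_iff] at this
            rcases pick3 (x := x₀) (y := u₀) h01 h02 h12 with h | h | h
            · exact ⟨_, dd_flip_self _ _, h⟩
            · exact ⟨_, dd_flip_self _ _, h⟩
            · exact ⟨_, dd_flip_self _ _, h⟩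
          · -- n = 2 : then d0 = 2 by parity, so u₀ is no neighbour of v₀
            have hn2' : n = 2 := by omega
            have h4 : (2:ℕ) ^ n = 4 := by rw [hn2']; norm_num
            have hd02 : d0 = 2 := by omega
            have h01 : flip ⟨0, by omega⟩ v₀ ≠ flip ⟨1, by omega⟩ v₀ := by
              intro h; have := flip_inj h; simp [Fin.ext_iff] at this
            rcases pick2 (x := x₀) h01 with h | h
            · refine ⟨_, dd_flip_self _ _, h, fun hu => ?_⟩
              have h1' := dd_flip_self ⟨0, by omega⟩ v₀
              rw [hu] at h1'
              omega
            · refine ⟨_, dd_flip_self _ _, h, fun hu => ?_⟩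
              have h1' := dd_flip_self ⟨1, by omega⟩ v₀
              rw [hu] at h1'
              omega
        have hstep : dd u₀ w = dd u₀ v₀ + 1 ∨ dd u₀ v₀ = dd u₀ w + 1 := by
          have : dd w u₀ = dd v₀ u₀ + 1 ∨ dd v₀ u₀ = dd w u₀ + 1 := by
            obtain ⟨i, hi, huni⟩ := adj_of_dd_one hw1
            refine dd_step i (fun h => hi h.symm) (fun j hj => ?_)
            by_contra h
            exact hj (huni j (Ne.symm h))
          rw [dd_comm w u₀, dd_comm v₀ u₀] at this
          exact this
        have hd3 : n + 3 ≤ 2 ^ n ∨ n = 2 := by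
          rcases Nat.lt_or_ge n 3 with h | h
          · right; omega
          · left; exact add_three_le_two_pow n h
        set t := 2 ^ n - 2 + (d0 + 1) % 2 with ht
        set s := m - 1 - t with hs
        obtain ⟨P1, hP1, hl1⟩ := Hpan n u₀ w t (by omega)
          (by
            have hduw : dd u₀ w ≤ n := dd_le _ _
            rcases hd3 with h | h
            · omega
            · have h4 : (2:ℕ) ^ n = 4 := by rw [h]; norm_num
              omega) (by omega)
          (fun h => absurd h.symm hwu)
        obtain ⟨P2, hP2, hl2, hx2⟩ := IH x₀ w v₀ s (ne_of_dd_one hw1) hwx hx0v.symm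
          (by omega) (by omega) (by omega)
        obtain ⟨W, hW, hlW, hsW⟩ := mix hac P1 P2 hP1 hP2
        refine ⟨W, hW, by rw [hlW, hl1, hl2]; omega, ?_⟩
        rw [hsW]
        simp only [List.mem_append]
        push_neg
        exact ⟨not_mem_map_vcons_ne hac x₀ _, not_mem_map_vcons hx2⟩


end QnkAux

namespace QnkAux
open Finset
variable {n : ℕ}

/-- Fault-tolerant panconnectivity of the hypercube: paths of every admissible
length `m ≤ 2^n - 3` avoiding one faulty vertex. -/
theorem Fpan : ∀ (n : ℕ) (x u v : Fin n → Bool) (m : ℕ), u ≠ v → u ≠ x → v ≠ x →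
    m % 2 = dd u v % 2 → dd u v ≤ m → m + 3 ≤ 2 ^ n →
    ∃ p : (hypercube n).Walk u v, p.IsPath ∧ p.length = m ∧ x ∉ p.support := by
  intro N
  induction N with
  | zero =>
    intro x u v m _ _ _ _ _ hub
    exfalso
    norm_num at hub
    omega
  | succ n IH =>
    intro x u v m hne hux hvx hpar hdle hub
    obtain ⟨j, hj⟩ : ∃ j, u j ≠ x j := by
      by_contra h
      push_neg at h
      exact hux (funext h)
    set σ : Equiv.Perm (Fin (n+1)) := Equiv.swap 0 j with hσ
    have hσσ : ∀ w : Fin (n+1) → Bool, (w ∘ σ) ∘ σ = w := by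
      intro w
      funext i
      simp [hσ, Function.comp, Equiv.swap_apply_self]
    have hinj := comp_perm_injective σ
    have h0' : (u ∘ σ) 0 ≠ (x ∘ σ) 0 := by
      simpa [hσ, Function.comp, Equiv.swap_apply_left] using hj
    obtain ⟨p, hp, hl, hx⟩ := Fcore n IH (x ∘ σ) (u ∘ σ) (v ∘ σ) m
      (fun h => hne (hinj h)) (fun h => hux (hinj h)) (fun h => hvx (hinj h)) h0'
      (by rw [dd_perm]; exact hpar) (by rw [dd_perm]; exact hdle) hub
    refine ⟨(permW σ p).copy (hσσ u) (hσσ v), ?_, ?_, ?_⟩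
    · rw [SimpleGraph.Walk.isPath_copy]
      exact permW_isPath σ hp
    · rw [SimpleGraph.Walk.length_copy, permW_length]
      exact hl
    · rw [SimpleGraph.Walk.support_copy, permW_support]
      intro hmem
      simp only [List.mem_map] at hmem
      obtain ⟨z, hz, hzx⟩ := hmem
      apply hx
      have hzeq : z = x ∘ σ := by
        have h2 := congrArg (fun w : Fin (n+1) → Bool => w ∘ σ) hzx
        rw [hσσ z] at h2
        rw [h2]
      rw [← hzeq]
      exact hz

lemma card_filter_lt {n : ℕ} (k : ℕ) (h2 : k ≤ n) :
    ((Finset.univ : Finset (Fin n)).filter fun i => i.val < k).card = k := by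
  have hset : ((Finset.univ : Finset (Fin n)).filter fun i => i.val < k) =
      Finset.map ⟨Fin.castLE h2, Fin.castLE_injective h2⟩ Finset.univ := by
    ext i
    simp only [Finset.mem_filter, Finset.mem_univ, true_and, Finset.mem_map,
      Function.Embedding.coeFn_mk]
    constructor
    · intro h
      exact ⟨⟨i.val, h⟩, Fin.ext rfl⟩
    · rintro ⟨j, rfl⟩
      exact j.isLt
  rw [hset, Finset.card_map, Finset.card_univ, Fintype.card_fin]

lemma dd_skip {n k : ℕ} (h2 : k ≤ n) {u v : Fin n → Bool} (h : skipRel n k u v) :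
    dd u v = k := by
  unfold dd
  have hset : ((Finset.univ : Finset (Fin n)).filter fun i => u i ≠ v i) =
      (Finset.univ.filter fun i : Fin n => i.val < k) := by
    ext i
    simp only [Finset.mem_filter, Finset.mem_univ, true_and]
    constructor
    · intro hne
      by_contra hlt
      exact hne ((h.2 i).2 (Nat.not_lt.mp hlt))
    · intro hlt
      exact (h.2 i).1 hlt
  rw [hset, card_filter_lt k h2]

end QnkAux

/-- If `k` is even, then every edge of `Q_{n,k}` (`n ≥ 3`, `2 ≤ k ≤ n`) lies on a
cycle of every odd length `l` with `k + 3 ≤ l ≤ 2^n - 1`. -/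
theorem stmt14 (n k : ℕ) (hk : Even k) (h1 : 2 ≤ k) (h2 : k ≤ n) (hn : 3 ≤ n) :
    ∀ e ∈ (enhanced n k).edgeSet, ∀ l : ℕ, Odd l → k + 3 ≤ l → l ≤ 2 ^ n - 1 →
      EdgeOnCycle (enhanced n k) e l := by
  classical
  intro e he
  have h8 : (8:ℕ) ≤ 2 ^ n := by
    calc (8:ℕ) = 2 ^ 3 := by norm_num
    _ ≤ 2 ^ n := Nat.pow_le_pow_right (by norm_num) hn
  have hk0 : k % 2 = 0 := Nat.even_iff.mp hk
  revert he
  induction e using Sym2.ind with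
  | _ u v =>
    intro he l hlodd hlk hlub
    have hl1 : l % 2 = 1 := Nat.odd_iff.mp hlodd
    have hlub' : l + 1 ≤ 2 ^ n := by omega
    rw [SimpleGraph.mem_edgeSet] at he
    have hGle : ∀ (w z : Fin n → Bool) (p : (hypercube n).Walk w z),
        ∀ e' ∈ p.edges, e' ∈ (enhanced n k).edgeSet := by
      intro w z p e' he'
      have := p.edges_subset_edgeSet he'
      exact SimpleGraph.edgeSet_mono (fun _ _ h => Or.inl h) this
    rcases he with hAdj | hskip
    · -- hypercube edge
      have hvu : v ≠ u := hAdj.ne'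
      obtain ⟨i, hi, huniq⟩ := hAdj
      have h0n : (0:ℕ) < n := by omega
      have h1n : (1:ℕ) < n := by omega
      set fk : Fin n → Bool := fun j => if j.val < k then !(u j) else u j with hfk
      have hfku : fk ≠ u := by
        intro h
        have := congrFun h ⟨0, h0n⟩
        simp only [hfk] at this
        rw [if_pos (by simpa using h1.trans_lt' (by norm_num) : (0:ℕ) < k)] at this
        exact (Bool.not_ne_self _) this
      have hskipfk : skipRel n k fk u := by
        refine ⟨hfku, fun j => ⟨fun hlt => ?_, fun hge => ?_⟩⟩
        · simp only [hfk]
          rw [if_pos hlt]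
          exact (Bool.not_ne_self _)
        · simp only [hfk]
          rw [if_neg (Nat.not_lt.mpr hge)]
      have hvj : ∀ j, j ≠ i → v j = u j := by
        intro j hj
        by_contra h
        exact hj (huniq j (Ne.symm h))
      have hvi : v i = !(u i) := by
        cases hui : u i <;> cases hvi' : v i <;> simp_all
      set S := ((Finset.univ : Finset (Fin n)).filter fun j : Fin n => j.val < k) with hS
      have hScard : S.card = k := QnkAux.card_filter_lt k h2
      have hddvfk : QnkAux.dd v fk = k - 1 ∨ QnkAux.dd v fk = k + 1 := by
        by_cases hik : i.val < k
        · left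
          have hset : ((Finset.univ : Finset (Fin n)).filter fun j => v j ≠ fk j)
              = S.erase i := by
            ext j
            simp only [Finset.mem_filter, Finset.mem_univ, true_and, Finset.mem_erase, hS]
            by_cases hji : j = i
            · subst hji
              simp only [hvi, hfk, if_pos hik]
              simp
            · rw [hvj j hji, hfk]
              by_cases hjk : j.val < k
              · simp [hjk, hji]
              · simp [hjk, hji]
          rw [QnkAux.dd, hset, Finset.card_erase_of_mem (by simp [hS, hik]), hScard]
        · right
          have hset : ((Finset.univ : Finset (Fin n)).filter fun j => v j ≠ fk j)
              = insert i S := by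
            ext j
            simp only [Finset.mem_filter, Finset.mem_univ, true_and, Finset.mem_insert, hS]
            by_cases hji : j = i
            · subst hji
              simp only [hvi, hfk, if_neg hik]
              simp
            · rw [hvj j hji, hfk]
              by_cases hjk : j.val < k
              · simp [hjk, hji]
              · simp [hjk, hji]
          rw [QnkAux.dd, hset, Finset.card_insert_of_notMem (by simp [hS, hik]), hScard]
      have hvfk : v ≠ fk := by
        intro h
        by_cases hi0 : i = (⟨0, h0n⟩ : Fin n)
        · have hj1 : (⟨1, h1n⟩ : Fin n) ≠ i := by
            rw [hi0]
            simp [Fin.ext_iff]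
          have := congrFun h ⟨1, h1n⟩
          rw [hvj _ hj1, hfk] at this
          simp only at this
          rw [if_pos (by omega : (1:ℕ) < k)] at this
          exact (Bool.not_ne_self _) this.symm
        · have hj0 : (⟨0, h0n⟩ : Fin n) ≠ i := fun hh => hi0 hh.symm
          have := congrFun h ⟨0, h0n⟩
          rw [hvj _ hj0, hfk] at this
          simp only at this
          rw [if_pos (by omega : (0:ℕ) < k)] at this
          exact (Bool.not_ne_self _) this.symm
      obtain ⟨D, hD, hlD, hDx⟩ := QnkAux.Fpan n u v fk (l - 2) hvfk hvu hfku
        (by omega) (by omega) (by omega)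
      set D' := D.transfer (enhanced n k) (hGle _ _ D) with hD'
      have hD'path : D'.IsPath := hD.transfer _
      have hD'sup : D'.support = D.support := D.support_transfer _
      have henh : (enhanced n k).Adj u v := Or.inl ⟨i, hi, huniq⟩
      have henh2 : (enhanced n k).Adj fk u := Or.inr hskipfk
      set Q : (enhanced n k).Walk v u := D'.append (.cons henh2 .nil) with hQ
      have hQpath : Q.IsPath := by
        rw [SimpleGraph.Walk.isPath_def, hQ, SimpleGraph.Walk.support_append]
        simp only [SimpleGraph.Walk.support_cons, SimpleGraph.Walk.support_nil,
          List.tail_cons]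
        rw [hD'sup, List.nodup_append]
        refine ⟨hD.support_nodup, List.nodup_singleton u, ?_⟩
        intro z hz z' hz2 hzz
        simp only [List.mem_singleton] at hz2
        subst hz2 hzz
        exact hDx hz
      have hnoedge : s(u, v) ∉ Q.edges := by
        rw [hQ, SimpleGraph.Walk.edges_append]
        simp only [SimpleGraph.Walk.edges_cons, SimpleGraph.Walk.edges_nil]
        rw [SimpleGraph.Walk.edges_transfer]
        intro hmem
        rw [List.mem_append] at hmem
        rcases hmem with hmem | hmem
        · exact hDx (D.fst_mem_support_of_mem_edges hmem)
        · simp only [List.mem_singleton] at hmem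
          rw [Sym2.eq_iff] at hmem
          rcases hmem with ⟨h', _⟩ | ⟨_, h'⟩
          · exact hfku h'.symm
          · exact hvfk h'
      refine ⟨u, .cons henh Q, SimpleGraph.Path.cons_isCycle ⟨Q, hQpath⟩ henh hnoedge, ?_, ?_⟩
      · rw [SimpleGraph.Walk.length_cons, hQ, SimpleGraph.Walk.length_append,
          SimpleGraph.Walk.length_transfer, SimpleGraph.Walk.length_cons,
          SimpleGraph.Walk.length_nil, hlD]
        omega
      · rw [SimpleGraph.Walk.edges_cons]
        exact List.mem_cons_self
    · -- skip edge
      have hvu : v ≠ u := fun h => hskip.1 h.symm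
      have hddvu : QnkAux.dd v u = k := by
        rw [QnkAux.dd_comm]
        exact QnkAux.dd_skip h2 hskip
      obtain ⟨P, hP, hlP⟩ := QnkAux.Hpan n v u (l - 1) (by omega) (by omega) (by omega)
        (fun h => absurd h hvu)
      set P' := P.transfer (enhanced n k) (hGle _ _ P) with hP'
      have hP'path : P'.IsPath := hP.transfer _
      have henh : (enhanced n k).Adj u v := Or.inr hskip
      have hnoedge : s(u, v) ∉ P'.edges := by
        rw [hP', SimpleGraph.Walk.edges_transfer]
        intro hmem
        have hedge := P.edges_subset_edgeSet hmem
        rw [SimpleGraph.mem_edgeSet] at hedge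
        have := QnkAux.adj_iff.mp hedge
        have hdduv : QnkAux.dd u v = k := by rw [QnkAux.dd_comm]; exact hddvu
        omega
      refine ⟨u, .cons henh P', SimpleGraph.Path.cons_isCycle ⟨P', hP'path⟩ henh hnoedge,
        ?_, ?_⟩
      · rw [SimpleGraph.Walk.length_cons, hP', SimpleGraph.Walk.length_transfer, hlP]
        omega
      · rw [SimpleGraph.Walk.edges_cons]
        exact List.mem_cons_self
end
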